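/- Let L ∈ ℂ^{N×N} be a Hermitian matrix whose diagonal entries are negative real numbers and which is strictly diagonally dominant, i.e. |L_{ii}| > Σ_{j≠i} |L_{ij}| for every i. Then for every nonzero U ∈ ℂ^N and every index i with |U_i| = max_{1≤j≤N} |U_j|, one has Re( conj(U_i)·(LU)_i ) < 0. -/

import Mathlib

theorem hermitian_diag_dominant_dissipative (N : ℕ) (L : Matrix (Fin N) (Fin N) ℂ)
    (hherm : L.IsHermitian)
    (hdiag : ∀ i : Fin N, (L i i).re < 0 ∧ (L i i).im = 0)
    (hdom : ∀ i : Fin N, ∑ j ∈ Finset.univ \ {i}, ‖L i j‖ < ‖L i i‖) :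
    ∀ U : Fin N → ℂ, U ≠ 0 → ∀ i : Fin N,
      (∀ j : Fin N, ‖U j‖ ≤ ‖U i‖) →
        ((starRingEnd ℂ) (U i) * L.mulVec U i).re < 0 := by
  intro U hU i hmax
  obtain ⟨k, hk⟩ : ∃ k, U k ≠ 0 := by
    by_contra h; push_neg at h; exact hU (funext h)
  have ha : 0 < ‖U i‖ :=
    lt_of_lt_of_le (norm_pos_iff.mpr hk) (hmax k)
  set a := ‖U i‖ with ha_def
  have h1 : ((starRingEnd ℂ) (U i) * L.mulVec U i).re
      = ∑ j, ((starRingEnd ℂ) (U i) * (L i j * U j)).re := by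
    simp [Matrix.mulVec, dotProduct, Finset.mul_sum, Complex.re_sum]
  have hsplit : ∑ j, ((starRingEnd ℂ) (U i) * (L i j * U j)).re
      = (∑ j ∈ Finset.univ \ {i}, ((starRingEnd ℂ) (U i) * (L i j * U j)).re)
        + ((starRingEnd ℂ) (U i) * (L i i * U i)).re :=
    (Finset.sum_eq_sum_sdiff_singleton_add (Finset.mem_univ i) _)
  have hdiagterm : ((starRingEnd ℂ) (U i) * (L i i * U i)).re = (L i i).re * a ^ 2 := by
    have : (starRingEnd ℂ) (U i) * (L i i * U i) = L i i * Complex.normSq (U i) := by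
      push_cast [Complex.normSq_eq_conj_mul_self]; ring
    rw [this, Complex.mul_re]
    simp only [Complex.ofReal_re, Complex.ofReal_im, (hdiag i).2, mul_zero, zero_mul, sub_zero]
    rw [← Complex.sq_norm]
  have habs : ‖L i i‖ = -(L i i).re := by
    have h2 := (hdiag i).2
    have h1' := (hdiag i).1
    rw [Complex.norm_def, Complex.normSq_apply, h2]
    rw [mul_zero, add_zero, Real.sqrt_mul_self_eq_abs, abs_of_neg h1']
  have hrest : ∑ j ∈ Finset.univ \ {i}, ((starRingEnd ℂ) (U i) * (L i j * U j)).re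
      ≤ (∑ j ∈ Finset.univ \ {i}, ‖L i j‖) * a ^ 2 := by
    rw [Finset.sum_mul]
    apply Finset.sum_le_sum
    intro j _
    calc ((starRingEnd ℂ) (U i) * (L i j * U j)).re
        ≤ ‖(starRingEnd ℂ) (U i) * (L i j * U j)‖ := Complex.re_le_norm _
      _ = a * (‖L i j‖ * ‖U j‖) := by simp [ha_def]
      _ ≤ a * (‖L i j‖ * a) := by
          apply mul_le_mul_of_nonneg_left _ ha.le
          exact mul_le_mul_of_nonneg_left (hmax j) (norm_nonneg _)
      _ = ‖L i j‖ * a ^ 2 := by ring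
  have hsumlt : (∑ j ∈ Finset.univ \ {i}, ‖L i j‖) * a ^ 2
      < ‖L i i‖ * a ^ 2 := by
    apply mul_lt_mul_of_pos_right (hdom i) (by positivity)
  calc ((starRingEnd ℂ) (U i) * L.mulVec U i).re
      = (∑ j ∈ Finset.univ \ {i}, ((starRingEnd ℂ) (U i) * (L i j * U j)).re)
        + (L i i).re * a ^ 2 := by rw [h1, hsplit, hdiagterm]
    _ ≤ (∑ j ∈ Finset.univ \ {i}, ‖L i j‖) * a ^ 2 + (L i i).re * a ^ 2 := by
        linarith
    _ < ‖L i i‖ * a ^ 2 + (L i i).re * a ^ 2 := by linarith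
    _ = 0 := by rw [habs]; ring
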